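/- arXiv:2112.06332 — 2 statements merged into one kernel-verified Lean document; each statement's English description precedes it below -/
import Mathlib

section
/- Let T ≤ SL₂(ℂ) be the subgroup of diagonal matrices, let 𝒦 = {z ∈ ℂ : Re z ≥ −1/2} \ {z ∈ ℂ : Re z = −1/2 and Im z < 0}, and for α ∈ ℂ let g_α = [[1, α],[1, 1+α]] ∈ SL₂(ℂ). For h ∈ SL₂(ℂ) write hTh⁻¹ for the set {h t h⁻¹ : t ∈ T}. Then for all g₁, g₂ ∈ SL₂(ℂ) exactly one of the following holds: (i) there exists A ∈ SL₂(ℂ) such that (A g₁) T (A g₁)⁻¹ = T and (A g₂) T (A g₂)⁻¹ = T; (ii) there exists a unique α ∈ 𝒦 such that for some A ∈ SL₂(ℂ), (A g₁) T (A g₁)⁻¹ = g_α T g_α⁻¹ and (A g₂) T (A g₂)⁻¹ = T. (Thus the pairs (T, T) and (g_α T g_α⁻¹, T), α ∈ 𝒦, form a minimal set of representatives of the orbits of pairs of maximal tori of SL₂(ℂ) under simultaneous conjugation.) -/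
open Matrix

/-- The diagonal torus `T ≤ SL₂(ℂ)`. -/
def Tdiag : Set (SpecialLinearGroup (Fin 2) ℂ) :=
  {t | (t : Matrix (Fin 2) (Fin 2) ℂ) 0 1 = 0 ∧ (t : Matrix (Fin 2) (Fin 2) ℂ) 1 0 = 0}

/-- The conjugate `h S h⁻¹` of a subset `S ⊆ SL₂(ℂ)`. -/
def conjSet (h : SpecialLinearGroup (Fin 2) ℂ) (S : Set (SpecialLinearGroup (Fin 2) ℂ)) :
    Set (SpecialLinearGroup (Fin 2) ℂ) :=
  (fun t => h * t * h⁻¹) '' S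

/-- `𝒦 = {z : Re z ≥ -1/2} \ {z : Re z = -1/2, Im z < 0}`. -/
def Kflat : Set ℂ :=
  {z : ℂ | -(1 / 2) ≤ z.re} \ {z : ℂ | z.re = -(1 / 2) ∧ z.im < 0}

/-- `g_α = [[1, α],[1, 1+α]] ∈ SL₂(ℂ)`. -/
def gMat (α : ℂ) : SpecialLinearGroup (Fin 2) ℂ :=
  ⟨!![1, α; 1, 1 + α], by rw [Matrix.det_fin_two_of]; ring⟩

namespace SL2Aux

abbrev SL2 := SpecialLinearGroup (Fin 2) ℂ

def e (x : SL2) (i j : Fin 2) : ℂ := (x : Matrix (Fin 2) (Fin 2) ℂ) i j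

lemma e_def (x : SL2) (i j : Fin 2) : e x i j = (x : Matrix (Fin 2) (Fin 2) ℂ) i j := rfl

/-- Membership in the normalizer of the diagonal torus. -/
def isN (h : SL2) : Prop := (e h 0 1 = 0 ∧ e h 1 0 = 0) ∨ (e h 0 0 = 0 ∧ e h 1 1 = 0)

lemma det_e (x : SL2) : e x 0 0 * e x 1 1 - e x 0 1 * e x 1 0 = 1 := by
  have := x.prop; rwa [Matrix.det_fin_two] at this

lemma mul_e (x y : SL2) (i j : Fin 2) :
    e (x * y) i j = e x i 0 * e y 0 j + e x i 1 * e y 1 j := by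
  simp [e, Matrix.mul_apply, Fin.sum_univ_two]

lemma inv_coe (x : SL2) : (↑(x⁻¹) : Matrix (Fin 2) (Fin 2) ℂ) =
    !![e x 1 1, -(e x 0 1); -(e x 1 0), e x 0 0] := by
  rw [Matrix.SpecialLinearGroup.coe_inv, Matrix.adjugate_fin_two]; rfl

lemma inv_e_00 (x : SL2) : e (x⁻¹) 0 0 = e x 1 1 := by rw [e, inv_coe]; simp
lemma inv_e_01 (x : SL2) : e (x⁻¹) 0 1 = -(e x 0 1) := by rw [e, inv_coe]; simp
lemma inv_e_10 (x : SL2) : e (x⁻¹) 1 0 = -(e x 1 0) := by rw [e, inv_coe]; simp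
lemma inv_e_11 (x : SL2) : e (x⁻¹) 1 1 = e x 0 0 := by rw [e, inv_coe]; simp

lemma isN_one : isN 1 := by left; constructor <;> simp [e]

lemma isN_mul {x y : SL2} (hx : isN x) (hy : isN y) : isN (x * y) := by
  rcases hx with ⟨h1, h2⟩ | ⟨h1, h2⟩ <;> rcases hy with ⟨h3, h4⟩ | ⟨h3, h4⟩
  · left; constructor <;> simp [mul_e, h1, h2, h3, h4]
  · right; constructor <;> simp [mul_e, h1, h2, h3, h4]
  · right; constructor <;> simp [mul_e, h1, h2, h3, h4]
  · left; constructor <;> simp [mul_e, h1, h2, h3, h4]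

lemma isN_inv {x : SL2} (hx : isN x) : isN (x⁻¹) := by
  rcases hx with ⟨h1, h2⟩ | ⟨h1, h2⟩
  · left; constructor <;> simp [inv_e_01, inv_e_10, h1, h2]
  · right; constructor <;> simp [inv_e_00, inv_e_11, h1, h2]

lemma not_isN_gMat (α : ℂ) : ¬ isN (gMat α) := by
  rintro (⟨-, h⟩ | ⟨h, -⟩) <;> simp [gMat, e] at h

lemma mem_Tdiag_iff (t : SL2) : t ∈ Tdiag ↔ e t 0 1 = 0 ∧ e t 1 0 = 0 := Iff.rfl

/-- conjugation of a `Tdiag` element by an `isN` element stays in `Tdiag`. -/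
lemma conj_mem_Tdiag {g t : SL2} (hg : isN g) (ht : t ∈ Tdiag) : g * t * g⁻¹ ∈ Tdiag := by
  rw [mem_Tdiag_iff] at ht ⊢
  obtain ⟨ht1, ht2⟩ := ht
  rcases hg with ⟨h1, h2⟩ | ⟨h1, h2⟩ <;>
    constructor <;>
      simp [mul_e, inv_e_00, inv_e_01, inv_e_10, inv_e_11, h1, h2, ht1, ht2]

lemma conjSet_conjSet (g g' : SL2) (S : Set SL2) :
    conjSet g (conjSet g' S) = conjSet (g * g') S := by
  unfold conjSet
  rw [Set.image_image]
  apply Set.image_congr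
  intro t _
  simp [mul_assoc]

@[simp] lemma conjSet_one (S : Set SL2) : conjSet 1 S = S := by
  unfold conjSet; simp

lemma t0_def : ∃ t : SL2, t ∈ Tdiag ∧ e t 0 0 = 2 ∧ e t 1 1 = 2⁻¹ := by
  refine ⟨⟨!![(2:ℂ), 0; 0, 2⁻¹], by rw [Matrix.det_fin_two_of]; norm_num⟩, ⟨?_, ?_⟩, ?_, ?_⟩ <;>
    simp [Tdiag, e]

/-- Main characterization: `h T h⁻¹ = T ↔ h ∈ N(T)`. -/
lemma conjTdiag_eq_iff (h : SL2) : conjSet h Tdiag = Tdiag ↔ isN h := by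
  constructor
  · intro hEq
    obtain ⟨t, ht, ht00, ht11⟩ := t0_def
    have hmem : h * t * h⁻¹ ∈ Tdiag := by
      rw [← hEq]; exact ⟨t, ht, rfl⟩
    rw [mem_Tdiag_iff] at hmem
    obtain ⟨h1, h2⟩ := hmem
    rw [mem_Tdiag_iff] at ht
    obtain ⟨ht01, ht10⟩ := ht
    rw [mul_e] at h1 h2
    rw [mul_e, mul_e] at h1 h2
    rw [inv_e_01, inv_e_11, ht01, ht10, ht00, ht11] at h1
    rw [inv_e_00, inv_e_10, ht01, ht10, ht00, ht11] at h2
    have hdet : e h 0 0 * e h 1 1 - e h 0 1 * e h 1 0 = 1 := det_e h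
    have hab : e h 0 0 * e h 0 1 = 0 := by
      have h3 : e h 0 0 * e h 0 1 * (2⁻¹ - 2 : ℂ) = 0 := by linear_combination h1
      rcases mul_eq_zero.mp h3 with h' | h'
      · exact h'
      · norm_num at h'
    have hcd : e h 1 0 * e h 1 1 = 0 := by
      have h3 : e h 1 0 * e h 1 1 * ((2 : ℂ) - 2⁻¹) = 0 := by linear_combination h2
      rcases mul_eq_zero.mp h3 with h' | h'
      · exact h'
      · norm_num at h'
    rcases mul_eq_zero.mp hab with ha | hb
    · right
      refine ⟨ha, ?_⟩
      have hc : e h 1 0 ≠ 0 := by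
        intro hc; rw [ha, hc] at hdet; simp at hdet
      rcases mul_eq_zero.mp hcd with h' | h'
      · exact absurd h' hc
      · exact h'
    · left
      refine ⟨hb, ?_⟩
      have hd : e h 1 1 ≠ 0 := by
        intro hd; rw [hb, hd] at hdet; simp at hdet
      rcases mul_eq_zero.mp hcd with h' | h'
      · exact h'
      · exact absurd h' hd
  · intro hN
    apply Set.Subset.antisymm
    · rintro x ⟨t, ht, rfl⟩
      exact conj_mem_Tdiag hN ht
    · intro x hx
      refine ⟨h⁻¹ * x * h, ?_, ?_⟩
      · have := conj_mem_Tdiag (isN_inv hN) hx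
        simpa [mul_assoc] using this
      · simp [mul_assoc]

lemma conj_eq_conj_iff (h k : SL2) :
    conjSet h Tdiag = conjSet k Tdiag ↔ isN (k⁻¹ * h) := by
  rw [← conjTdiag_eq_iff]
  constructor
  · intro hEq
    rw [← conjSet_conjSet, hEq, conjSet_conjSet, inv_mul_cancel, conjSet_one]
  · intro hEq
    have := congrArg (conjSet k) hEq
    rwa [conjSet_conjSet, ← mul_assoc, mul_inv_cancel, one_mul] at this

lemma gMat_inv_coe (α : ℂ) : (↑((gMat α)⁻¹) : Matrix (Fin 2) (Fin 2) ℂ) =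
    !![1 + α, -α; -1, 1] := by
  rw [Matrix.SpecialLinearGroup.coe_inv]
  show Matrix.adjugate (!![1, α; 1, 1 + α]) = _
  rw [Matrix.adjugate_fin_two]
  norm_num

lemma X_e_01 (α : ℂ) (m : SL2) :
    e ((gMat α)⁻¹ * m) 0 1 = (1 + α) * e m 0 1 + (-α) * e m 1 1 := by
  rw [e, Matrix.SpecialLinearGroup.coe_mul, gMat_inv_coe, Matrix.mul_apply, Fin.sum_univ_two]
  simp [e]

lemma X_e_10 (α : ℂ) (m : SL2) :
    e ((gMat α)⁻¹ * m) 1 0 = (-1) * e m 0 0 + 1 * e m 1 0 := by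
  rw [e, Matrix.SpecialLinearGroup.coe_mul, gMat_inv_coe, Matrix.mul_apply, Fin.sum_univ_two]
  simp [e]

lemma X_e_00 (α : ℂ) (m : SL2) :
    e ((gMat α)⁻¹ * m) 0 0 = (1 + α) * e m 0 0 + (-α) * e m 1 0 := by
  rw [e, Matrix.SpecialLinearGroup.coe_mul, gMat_inv_coe, Matrix.mul_apply, Fin.sum_univ_two]
  simp [e]

lemma X_e_11 (α : ℂ) (m : SL2) :
    e ((gMat α)⁻¹ * m) 1 1 = (-1) * e m 0 1 + 1 * e m 1 1 := by
  rw [e, Matrix.SpecialLinearGroup.coe_mul, gMat_inv_coe, Matrix.mul_apply, Fin.sum_univ_two]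
  simp [e]

/- scalar certificates -/
lemma keyD1 (α u v a b c d : ℂ) (E1 : (1+α)*(u*b) - α*(v*d) = 0) (E2 : u*a - v*c = 0)
    (E3 : u*v = 1) (E4 : a*d - b*c = 1) : α = b*c := by
  linear_combination (-(v*c))*E1 + (α*d*v)*E2 + ((1+α)*c*b - α*d*a)*E3 + (-α)*E4

lemma keyD2 (α u v a b c d : ℂ) (F1 : (1+α)*(u*a) - α*(v*c) = 0) (F2 : v*d - u*b = 0)
    (E3 : u*v = 1) (E4 : a*d - b*c = 1) : α = -1 - b*c := by
  linear_combination (v*d)*F1 + (α*c*v)*F2 + (-((1+α)*a*d - α*c*b))*E3 + (-(1+α))*E4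

lemma keyA1 (α u v a b c d : ℂ) (G1 : (1+α)*(u*d) - α*(v*b) = 0) (G2 : u*c - v*a = 0)
    (E3 : u*v = -1) (E4 : a*d - b*c = 1) : α = -1 - b*c := by
  linear_combination (-(v*a))*G1 + (α*b*v)*G2 + ((1+α)*d*a - α*b*c)*E3 + (-(1+α))*E4

lemma keyA2 (α u v a b c d : ℂ) (H1 : (1+α)*(u*c) - α*(v*a) = 0) (H2 : v*b - u*d = 0)
    (E3 : u*v = -1) (E4 : a*d - b*c = 1) : α = b*c := by
  linear_combination (v*b)*H1 + (α*a*v)*H2 + (-((1+α)*c*b - α*a*d))*E3 + (-α)*E4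

/-- Constraint: if `n ∈ N(T)` and `g_α⁻¹ n h ∈ N(T)` then `α = bc` or `α = -1-bc`. -/
lemma alpha_constraint {h : SL2} (α : ℂ) (n : SL2) (hn : isN n)
    (hX : isN ((gMat α)⁻¹ * (n * h))) :
    α = e h 0 1 * e h 1 0 ∨ α = -1 - e h 0 1 * e h 1 0 := by
  have hdet : e h 0 0 * e h 1 1 - e h 0 1 * e h 1 0 = 1 := det_e h
  rcases hn with ⟨hn1, hn2⟩ | ⟨hn1, hn2⟩
  · -- n diagonal, u := e n 0 0, v := e n 1 1, u*v = 1
    have huv : e n 0 0 * e n 1 1 = 1 := by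
      have := det_e n; rw [hn1, hn2] at this; linear_combination this
    rcases hX with ⟨p, q⟩ | ⟨p, q⟩
    · left
      rw [X_e_01, mul_e, mul_e, hn1, hn2] at p
      rw [X_e_10, mul_e, mul_e, hn1, hn2] at q
      refine keyD1 α (e n 0 0) (e n 1 1) (e h 0 0) (e h 0 1) (e h 1 0) (e h 1 1)
        (by linear_combination p) (by linear_combination -q) huv hdet
    · right
      rw [X_e_00, mul_e, mul_e, hn1, hn2] at p
      rw [X_e_11, mul_e, mul_e, hn1, hn2] at q
      refine keyD2 α (e n 0 0) (e n 1 1) (e h 0 0) (e h 0 1) (e h 1 0) (e h 1 1)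
        (by linear_combination p) (by linear_combination q) huv hdet
  · -- n antidiagonal, u := e n 0 1, v := e n 1 0, u*v = -1
    have huv : e n 0 1 * e n 1 0 = -1 := by
      have := det_e n; rw [hn1, hn2] at this; linear_combination -this
    rcases hX with ⟨p, q⟩ | ⟨p, q⟩
    · right
      rw [X_e_01, mul_e, mul_e, hn1, hn2] at p
      rw [X_e_10, mul_e, mul_e, hn1, hn2] at q
      refine keyA1 α (e n 0 1) (e n 1 0) (e h 0 0) (e h 0 1) (e h 1 0) (e h 1 1)
        (by linear_combination p) (by linear_combination -q) huv hdet
    · left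
      rw [X_e_00, mul_e, mul_e, hn1, hn2] at p
      rw [X_e_11, mul_e, mul_e, hn1, hn2] at q
      refine keyA2 α (e n 0 1) (e n 1 0) (e h 0 0) (e h 0 1) (e h 1 0) (e h 1 1)
        (by linear_combination p) (by linear_combination q) huv hdet

section Realize

variable (h : SL2)

/-- diagonal element of `SL₂` -/
def dM (s t : ℂ) (hst : s * t = 1) : SL2 :=
  ⟨!![s, 0; 0, t], by rw [Matrix.det_fin_two_of]; linear_combination hst⟩

/-- antidiagonal element of `SL₂` -/
def wM (s t : ℂ) (hst : s * t = 1) : SL2 :=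
  ⟨!![0, s; -t, 0], by rw [Matrix.det_fin_two_of]; linear_combination hst⟩

lemma isN_dM (s t : ℂ) (hst : s * t = 1) : isN (dM s t hst) := by
  left; constructor <;> simp [dM, e]

lemma isN_wM (s t : ℂ) (hst : s * t = 1) : isN (wM s t hst) := by
  right; constructor <;> simp [wM, e]

lemma dM_e_00 (s t : ℂ) (hst : s * t = 1) : e (dM s t hst) 0 0 = s := by simp [dM, e]
lemma dM_e_01 (s t : ℂ) (hst : s * t = 1) : e (dM s t hst) 0 1 = 0 := by simp [dM, e]
lemma dM_e_10 (s t : ℂ) (hst : s * t = 1) : e (dM s t hst) 1 0 = 0 := by simp [dM, e]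
lemma dM_e_11 (s t : ℂ) (hst : s * t = 1) : e (dM s t hst) 1 1 = t := by simp [dM, e]
lemma wM_e_00 (s t : ℂ) (hst : s * t = 1) : e (wM s t hst) 0 0 = 0 := by simp [wM, e]
lemma wM_e_01 (s t : ℂ) (hst : s * t = 1) : e (wM s t hst) 0 1 = s := by simp [wM, e]
lemma wM_e_10 (s t : ℂ) (hst : s * t = 1) : e (wM s t hst) 1 0 = -t := by simp [wM, e]
lemma wM_e_11 (s t : ℂ) (hst : s * t = 1) : e (wM s t hst) 1 1 = 0 := by simp [wM, e]

lemma realize_bc (hor : (e h 0 0 ≠ 0 ∧ e h 1 0 ≠ 0) ∨ (e h 0 1 ≠ 0 ∧ e h 1 1 ≠ 0)) :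
    ∃ n, isN n ∧ isN ((gMat (e h 0 1 * e h 1 0))⁻¹ * (n * h)) := by
  have hdet : e h 0 0 * e h 1 1 - e h 0 1 * e h 1 0 = 1 := det_e h
  rcases hor with ⟨ha, hc⟩ | ⟨hb, hd⟩
  · obtain ⟨s, hs2⟩ : ∃ s : ℂ, s ^ 2 = e h 1 0 / e h 0 0 :=
      IsAlgClosed.exists_pow_nat_eq _ two_pos
    have hsa : s ^ 2 * e h 0 0 = e h 1 0 := by
      rw [hs2]; field_simp
    have hs : s ≠ 0 := by
      intro h0; rw [h0] at hsa; simp at hsa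
      first | exact hc hsa | exact hc hsa.symm
    have hst : s * s⁻¹ = 1 := mul_inv_cancel₀ hs
    refine ⟨dM s s⁻¹ hst, isN_dM s s⁻¹ hst, Or.inl ⟨?_, ?_⟩⟩
    · rw [X_e_01, mul_e, mul_e, dM_e_00, dM_e_01, dM_e_10, dM_e_11]
      have key : (e h 0 0 * s) *
          ((1 + e h 0 1 * e h 1 0) * (s * e h 0 1 + 0 * e h 1 1) +
           (-(e h 0 1 * e h 1 0)) * (0 * e h 0 1 + s⁻¹ * e h 1 1)) = (e h 0 0 * s) * 0 := by
        linear_combination ((1 + e h 0 1 * e h 1 0) * e h 0 1) * hsa +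
          (-(e h 0 1 * e h 1 0 * e h 0 0 * e h 1 1)) * hst +
          (-(e h 0 1 * e h 1 0)) * hdet
      exact mul_left_cancel₀ (mul_ne_zero ha hs) key
    · rw [X_e_10, mul_e, mul_e, dM_e_00, dM_e_01, dM_e_10, dM_e_11]
      have key : s * ((-1) * (s * e h 0 0 + 0 * e h 1 0) +
          1 * (0 * e h 0 0 + s⁻¹ * e h 1 0)) = s * 0 := by
        linear_combination (-1 : ℂ) * hsa + (e h 1 0) * hst
      exact mul_left_cancel₀ hs key
  · obtain ⟨s, hs2⟩ : ∃ s : ℂ, s ^ 2 = -(e h 0 1) / e h 1 1 :=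
      IsAlgClosed.exists_pow_nat_eq _ two_pos
    have hsd : s ^ 2 * e h 1 1 = -(e h 0 1) := by
      rw [hs2]; field_simp
    have hs : s ≠ 0 := by
      intro h0; rw [h0] at hsd; simp at hsd
      exact hb hsd
    have hst : s * s⁻¹ = 1 := mul_inv_cancel₀ hs
    refine ⟨wM s s⁻¹ hst, isN_wM s s⁻¹ hst, Or.inr ⟨?_, ?_⟩⟩
    · rw [X_e_00, mul_e, mul_e, wM_e_00, wM_e_01, wM_e_10, wM_e_11]
      have key : (e h 1 1 * s) *
          ((1 + e h 0 1 * e h 1 0) * (0 * e h 0 0 + s * e h 1 0) +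
           (-(e h 0 1 * e h 1 0)) * (-s⁻¹ * e h 0 0 + 0 * e h 1 0)) = (e h 1 1 * s) * 0 := by
        linear_combination ((1 + e h 0 1 * e h 1 0) * e h 1 0) * hsd +
          (e h 0 1 * e h 1 0 * e h 0 0 * e h 1 1) * hst +
          (e h 0 1 * e h 1 0) * hdet
      exact mul_left_cancel₀ (mul_ne_zero hd hs) key
    · rw [X_e_11, mul_e, mul_e, wM_e_00, wM_e_01, wM_e_10, wM_e_11]
      have key : s * ((-1) * (0 * e h 0 1 + s * e h 1 1) +
          1 * (-s⁻¹ * e h 0 1 + 0 * e h 1 1)) = s * 0 := by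
        linear_combination (-1 : ℂ) * hsd + (-(e h 0 1)) * hst
      exact mul_left_cancel₀ hs key

lemma realize_other (hor : (e h 0 0 ≠ 0 ∧ e h 1 0 ≠ 0) ∨ (e h 0 1 ≠ 0 ∧ e h 1 1 ≠ 0)) :
    ∃ n, isN n ∧ isN ((gMat (-1 - e h 0 1 * e h 1 0))⁻¹ * (n * h)) := by
  have hdet : e h 0 0 * e h 1 1 - e h 0 1 * e h 1 0 = 1 := det_e h
  rcases hor with ⟨ha, hc⟩ | ⟨hb, hd⟩
  · obtain ⟨s, hs2⟩ : ∃ s : ℂ, s ^ 2 = -(e h 0 0) / e h 1 0 :=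
      IsAlgClosed.exists_pow_nat_eq _ two_pos
    have hsc : s ^ 2 * e h 1 0 = -(e h 0 0) := by
      rw [hs2]; field_simp
    have hs : s ≠ 0 := by
      intro h0; rw [h0] at hsc; simp at hsc
      exact ha hsc
    have hst : s * s⁻¹ = 1 := mul_inv_cancel₀ hs
    refine ⟨wM s s⁻¹ hst, isN_wM s s⁻¹ hst, Or.inl ⟨?_, ?_⟩⟩
    · rw [X_e_01, mul_e, mul_e, wM_e_00, wM_e_01, wM_e_10, wM_e_11]
      have key : (e h 1 0 * s) *
          ((1 + (-1 - e h 0 1 * e h 1 0)) * (0 * e h 0 1 + s * e h 1 1) +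
           (-(-1 - e h 0 1 * e h 1 0)) * (-s⁻¹ * e h 0 1 + 0 * e h 1 1)) = (e h 1 0 * s) * 0 := by
        linear_combination (-(e h 0 1 * e h 1 0 * e h 1 1)) * hsc +
          (-((1 + e h 0 1 * e h 1 0) * e h 0 1 * e h 1 0)) * hst +
          (e h 0 1 * e h 1 0) * hdet
      exact mul_left_cancel₀ (mul_ne_zero hc hs) key
    · rw [X_e_10, mul_e, mul_e, wM_e_00, wM_e_01, wM_e_10, wM_e_11]
      have key : s * ((-1) * (0 * e h 0 0 + s * e h 1 0) +
          1 * (-s⁻¹ * e h 0 0 + 0 * e h 1 0)) = s * 0 := by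
        linear_combination (-1 : ℂ) * hsc + (-(e h 0 0)) * hst
      exact mul_left_cancel₀ hs key
  · obtain ⟨s, hs2⟩ : ∃ s : ℂ, s ^ 2 = e h 1 1 / e h 0 1 :=
      IsAlgClosed.exists_pow_nat_eq _ two_pos
    have hsb : s ^ 2 * e h 0 1 = e h 1 1 := by
      rw [hs2]; field_simp
    have hs : s ≠ 0 := by
      intro h0; rw [h0] at hsb; simp at hsb
      first | exact hd hsb | exact hd hsb.symm
    have hst : s * s⁻¹ = 1 := mul_inv_cancel₀ hs
    refine ⟨dM s s⁻¹ hst, isN_dM s s⁻¹ hst, Or.inr ⟨?_, ?_⟩⟩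
    · rw [X_e_00, mul_e, mul_e, dM_e_00, dM_e_01, dM_e_10, dM_e_11]
      have key : (e h 0 1 * s) *
          ((1 + (-1 - e h 0 1 * e h 1 0)) * (s * e h 0 0 + 0 * e h 1 0) +
           (-(-1 - e h 0 1 * e h 1 0)) * (0 * e h 0 0 + s⁻¹ * e h 1 0)) = (e h 0 1 * s) * 0 := by
        linear_combination (-(e h 0 0 * e h 0 1 * e h 1 0)) * hsb +
          ((1 + e h 0 1 * e h 1 0) * e h 0 1 * e h 1 0) * hst +
          (-(e h 0 1 * e h 1 0)) * hdet
      exact mul_left_cancel₀ (mul_ne_zero hb hs) key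
    · rw [X_e_11, mul_e, mul_e, dM_e_00, dM_e_01, dM_e_10, dM_e_11]
      have key : s * ((-1) * (s * e h 0 1 + 0 * e h 1 1) +
          1 * (0 * e h 0 1 + s⁻¹ * e h 1 1)) = s * 0 := by
        linear_combination (-1 : ℂ) * hsb + (e h 1 1) * hst
      exact mul_left_cancel₀ hs key

end Realize

lemma notN_cases {h : SL2} (hh : ¬ isN h) :
    (e h 0 0 ≠ 0 ∧ e h 1 0 ≠ 0) ∨ (e h 0 1 ≠ 0 ∧ e h 1 1 ≠ 0) := by
  have hdet : e h 0 0 * e h 1 1 - e h 0 1 * e h 1 0 = 1 := det_e h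
  by_contra hcon
  push_neg at hcon
  obtain ⟨h1, h2⟩ := hcon
  by_cases ha : e h 0 0 = 0
  · have hbc : e h 0 1 * e h 1 0 = -1 := by rw [ha] at hdet; linear_combination -hdet
    have hb : e h 0 1 ≠ 0 := fun h' => by rw [h', zero_mul] at hbc; norm_num at hbc
    have hd : e h 1 1 = 0 := (h2 hb)
    exact hh (Or.inr ⟨ha, hd⟩)
  · have hc : e h 1 0 = 0 := h1 ha
    have had : e h 0 0 * e h 1 1 = 1 := by rw [hc] at hdet; linear_combination hdet
    have hd : e h 1 1 ≠ 0 := fun h' => by rw [h', mul_zero] at had; norm_num at had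
    have hb : e h 0 1 = 0 := by
      by_contra hb'
      exact hd (h2 hb')
    exact hh (Or.inl ⟨hb, hc⟩)

lemma Kchoice (β : ℂ) : ∃! α : ℂ, α ∈ Kflat ∧ (α = β ∨ α = -1 - β) := by
  have hKmem : ∀ z : ℂ, z ∈ Kflat ↔ (-(1/2) ≤ z.re ∧ ¬(z.re = -(1/2) ∧ z.im < 0)) := by
    intro z; rfl
  have hre : (-1 - β).re = -1 - β.re := by simp
  have him : (-1 - β).im = -β.im := by simp
  by_cases hβ : β ∈ Kflat
  · refine ⟨β, ⟨hβ, Or.inl rfl⟩, ?_⟩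
    rintro y ⟨hyK, rfl | rfl⟩
    · rfl
    · -- both β and -1-β in Kflat
      rw [hKmem] at hβ hyK
      obtain ⟨hβ1, hβ2⟩ := hβ
      obtain ⟨hy1, hy2⟩ := hyK
      rw [hre] at hy1
      have hreβ : β.re = -(1/2) := by linarith
      have himβ : β.im = 0 := by
        by_contra him0
        rcases lt_or_gt_of_ne him0 with h' | h'
        · exact hβ2 ⟨hreβ, h'⟩
        · apply hy2
          constructor
          · rw [hre, hreβ]; ring
          · rw [him]; linarith
      apply Complex.ext
      · rw [hre, hreβ]; norm_num
      · rw [him, himβ]; norm_num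
  · have hy : (-1 - β) ∈ Kflat := by
      rw [hKmem] at hβ ⊢
      push_neg at hβ
      rw [hre, him]
      by_cases hr : -(1/2) ≤ β.re
      · obtain ⟨hr2, hi⟩ := hβ hr
        refine ⟨by rw [hr2]; norm_num, ?_⟩
        rintro ⟨-, h'⟩
        linarith
      · push_neg at hr
        refine ⟨by linarith, ?_⟩
        rintro ⟨h', -⟩
        linarith
    refine ⟨-1 - β, ⟨hy, Or.inr rfl⟩, ?_⟩
    rintro y ⟨hyK, rfl | rfl⟩
    · exact absurd hyK hβ
    · rfl

lemma key_lemma (h : SL2) (hh : ¬ isN h) :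
    ∃! α : ℂ, α ∈ Kflat ∧ ∃ n, isN n ∧ isN ((gMat α)⁻¹ * (n * h)) := by
  obtain ⟨α₀, ⟨hK, hcase⟩, huniq⟩ := Kchoice (e h 0 1 * e h 1 0)
  have hor := notN_cases hh
  refine ⟨α₀, ⟨hK, ?_⟩, ?_⟩
  · rcases hcase with rfl | rfl
    · exact realize_bc h hor
    · exact realize_other h hor
  · rintro y ⟨hyK, n, hn, hX⟩
    exact huniq y ⟨hyK, alpha_constraint y n hn hX⟩

lemma P1_iff (g₁ g₂ : SL2) :
    (∃ A : SL2, conjSet (A * g₁) Tdiag = Tdiag ∧ conjSet (A * g₂) Tdiag = Tdiag) ↔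
      isN (g₂⁻¹ * g₁) := by
  constructor
  · rintro ⟨A, h1, h2⟩
    rw [conjTdiag_eq_iff] at h1 h2
    have := isN_mul (isN_inv h2) h1
    have heq : (A * g₂)⁻¹ * (A * g₁) = g₂⁻¹ * g₁ := by group
    rwa [heq] at this
  · intro hN
    refine ⟨g₂⁻¹, ?_, ?_⟩
    · rw [conjTdiag_eq_iff]; exact hN
    · rw [conjTdiag_eq_iff, inv_mul_cancel]; exact isN_one

lemma P2_iff (g₁ g₂ : SL2) (α : ℂ) :
    (∃ A : SL2, conjSet (A * g₁) Tdiag = conjSet (gMat α) Tdiag ∧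
        conjSet (A * g₂) Tdiag = Tdiag) ↔
      ∃ n, isN n ∧ isN ((gMat α)⁻¹ * (n * (g₂⁻¹ * g₁))) := by
  constructor
  · rintro ⟨A, h1, h2⟩
    rw [conj_eq_conj_iff] at h1
    rw [conjTdiag_eq_iff] at h2
    refine ⟨A * g₂, h2, ?_⟩
    have heq : (gMat α)⁻¹ * (A * g₂ * (g₂⁻¹ * g₁)) = (gMat α)⁻¹ * (A * g₁) := by group
    rw [heq]; exact h1
  · rintro ⟨n, hn, hX⟩
    refine ⟨n * g₂⁻¹, ?_, ?_⟩
    · rw [conj_eq_conj_iff]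
      have heq : (gMat α)⁻¹ * (n * g₂⁻¹ * g₁) = (gMat α)⁻¹ * (n * (g₂⁻¹ * g₁)) := by group
      rw [heq]; exact hX
    · rw [conjTdiag_eq_iff]
      have heq : n * g₂⁻¹ * g₂ = n := by group
      rw [heq]; exact hn

end SL2Aux

open SL2Aux in
/-- The pairs `(T,T)` and `(g_α T g_α⁻¹, T)`, `α ∈ 𝒦`, form a minimal set of
representatives of the orbits of pairs of maximal tori of `SL₂(ℂ)` under simultaneous
conjugation. -/
theorem pairs_of_tori_reps (g₁ g₂ : SpecialLinearGroup (Fin 2) ℂ) :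
    Xor'
      (∃ A : SpecialLinearGroup (Fin 2) ℂ,
        conjSet (A * g₁) Tdiag = Tdiag ∧ conjSet (A * g₂) Tdiag = Tdiag)
      (∃! α : ℂ, α ∈ Kflat ∧ ∃ A : SpecialLinearGroup (Fin 2) ℂ,
        conjSet (A * g₁) Tdiag = conjSet (gMat α) Tdiag ∧
        conjSet (A * g₂) Tdiag = Tdiag) := by
  set h : SL2 := g₂⁻¹ * g₁ with hh
  have hP2iff : (∃! α : ℂ, α ∈ Kflat ∧ ∃ A : SpecialLinearGroup (Fin 2) ℂ,
        conjSet (A * g₁) Tdiag = conjSet (gMat α) Tdiag ∧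
        conjSet (A * g₂) Tdiag = Tdiag) ↔
      (∃! α : ℂ, α ∈ Kflat ∧ ∃ n, isN n ∧ isN ((gMat α)⁻¹ * (n * h))) :=
    existsUnique_congr fun α => and_congr_right fun _ => P2_iff g₁ g₂ α
  by_cases hN : isN h
  · left
    refine ⟨(P1_iff g₁ g₂).mpr hN, ?_⟩
    intro hP2
    obtain ⟨α, ⟨-, n, hn, hX⟩, -⟩ := hP2iff.mp hP2
    have : isN (n * h * ((gMat α)⁻¹ * (n * h))⁻¹) :=
      isN_mul (isN_mul hn hN) (isN_inv hX)
    have heq : n * h * ((gMat α)⁻¹ * (n * h))⁻¹ = gMat α := by group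
    rw [heq] at this
    exact not_isN_gMat α this
  · right
    refine ⟨hP2iff.mpr (key_lemma h hN), ?_⟩
    intro hP1
    exact hN ((P1_iff g₁ g₂).mp hP1)
end

section
/- Let K be an algebraically closed field and let s, r ∈ K with s ≠ 0, r ≠ 0, s² ≠ 1, r² ≠ 1; set t = diag(s, s⁻¹), t' = diag(r, r⁻¹), Δ = s − s⁻¹, Δ' = r − r⁻¹, and X_α = [[s + αΔ, −αΔ],[(1+α)Δ, s⁻¹ − αΔ]]. Then for every α ∈ K with α ≠ 0 and α ≠ −1, the SL₂(K)-orbit of the pair (X_α, t') equals the set {(X, Y) : X is SL₂(K)-conjugate to t, Y is SL₂(K)-conjugate to t', and trace(X·Y) = s·r + s⁻¹·r⁻¹ + α·Δ·Δ'}. In particular this orbit is Zariski closed in C_t × C_{t'}. -/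
open Matrix

/-- `diag(s, s⁻¹) ∈ SL₂(K)` for `s ≠ 0`. -/
def diagSL {K : Type*} [Field K] (s : K) (hs : s ≠ 0) : SpecialLinearGroup (Fin 2) K :=
  ⟨!![s, 0; 0, s⁻¹], by rw [Matrix.det_fin_two_of]; field_simp; norm_num⟩

/-- `X_α = [[s + αΔ, -αΔ],[(1+α)Δ, s⁻¹ - αΔ]] ∈ SL₂(K)` where `Δ = s - s⁻¹`. -/
def Xa {K : Type*} [Field K] (s : K) (hs : s ≠ 0) (α : K) :
    SpecialLinearGroup (Fin 2) K :=
  ⟨!![s + α * (s - s⁻¹), -(α * (s - s⁻¹));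
      (1 + α) * (s - s⁻¹), s⁻¹ - α * (s - s⁻¹)], by
    rw [Matrix.det_fin_two_of]; field_simp; ring⟩

/-- The `SL₂(K)`-orbit of the pair `(P, Q)` under simultaneous conjugation. -/
def pairOrbit {K : Type*} [Field K] (P Q : SpecialLinearGroup (Fin 2) K) :
    Set (SpecialLinearGroup (Fin 2) K × SpecialLinearGroup (Fin 2) K) :=
  {pq | ∃ A : SpecialLinearGroup (Fin 2) K, pq = (A * P * A⁻¹, A * Q * A⁻¹)}

section Aux

variable {K : Type*} [Field K]

lemma SL2_coe_mul (A B : SpecialLinearGroup (Fin 2) K) :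
    ((A * B : SpecialLinearGroup (Fin 2) K) : Matrix (Fin 2) (Fin 2) K) =
      (A : Matrix (Fin 2) (Fin 2) K) * (B : Matrix (Fin 2) (Fin 2) K) :=
  rfl

lemma SL2_coe_inv (A : SpecialLinearGroup (Fin 2) K) :
    ((A⁻¹ : SpecialLinearGroup (Fin 2) K) : Matrix (Fin 2) (Fin 2) K) =
      adjugate (A : Matrix (Fin 2) (Fin 2) K) :=
  rfl

lemma SL2_trace_conj (A P : SpecialLinearGroup (Fin 2) K) :
    Matrix.trace ((A * P * A⁻¹ : SpecialLinearGroup (Fin 2) K) : Matrix (Fin 2) (Fin 2) K) =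
      Matrix.trace (P : Matrix (Fin 2) (Fin 2) K) := by
  simp only [SL2_coe_mul]
  rw [Matrix.trace_mul_cycle, ← SL2_coe_mul, ← SL2_coe_mul,
    inv_mul_cancel, one_mul]

/-- The explicit conjugator `B = !![1, α; 1, 1+α] ∈ SL₂(K)`. -/
def Bmat (α : K) : SpecialLinearGroup (Fin 2) K :=
  ⟨!![1, α; 1, 1 + α], by rw [Matrix.det_fin_two_of]; ring⟩

lemma Xa_eq_conj (s : K) (hs : s ≠ 0) (α : K) :
    Xa s hs α = Bmat α * diagSL s hs * (Bmat α)⁻¹ := by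
  apply Subtype.ext
  simp only [SL2_coe_mul, SL2_coe_inv]
  ext i j
  fin_cases i <;> fin_cases j <;>
    simp [Xa, diagSL, Bmat, Matrix.mul_apply, Fin.sum_univ_two,
      Matrix.adjugate_fin_two_of] <;> ring

lemma trace_Xa_diag (s r : K) (hs : s ≠ 0) (hr : r ≠ 0) (α : K) :
    Matrix.trace ((Xa s hs α : Matrix (Fin 2) (Fin 2) K) *
        (diagSL r hr : Matrix (Fin 2) (Fin 2) K)) =
      s * r + s⁻¹ * r⁻¹ + α * (s - s⁻¹) * (r - r⁻¹) := by
  simp [Xa, diagSL, Matrix.trace_fin_two, Matrix.mul_apply, Fin.sum_univ_two]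
  ring

lemma diagSL_mul_comm (a b : K) (ha : a ≠ 0) (hb : b ≠ 0) :
    diagSL a ha * diagSL b hb = diagSL b hb * diagSL a ha := by
  apply Subtype.ext
  simp only [SL2_coe_mul]
  ext i j
  fin_cases i <;> fin_cases j <;>
    simp [diagSL, Matrix.mul_apply, Fin.sum_univ_two] <;> ring

lemma diag_conj_coe (l : K) (hl : l ≠ 0) (P : SpecialLinearGroup (Fin 2) K) :
    ((diagSL l hl * P * (diagSL l hl)⁻¹ : SpecialLinearGroup (Fin 2) K) :
        Matrix (Fin 2) (Fin 2) K) =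
      !![(P : Matrix (Fin 2) (Fin 2) K) 0 0, l ^ 2 * (P : Matrix (Fin 2) (Fin 2) K) 0 1;
         (l⁻¹) ^ 2 * (P : Matrix (Fin 2) (Fin 2) K) 1 0, (P : Matrix (Fin 2) (Fin 2) K) 1 1] := by
  simp only [SL2_coe_mul, SL2_coe_inv]
  ext i j
  fin_cases i <;> fin_cases j <;>
    simp [diagSL, Matrix.mul_apply, Matrix.adjugate_fin_two_of, Fin.sum_univ_two,
      Matrix.vecMul, Matrix.vecHead, Matrix.vecTail, dotProduct] <;>
    (try field_simp) <;> (try ring) <;> (try tauto)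

end Aux

/-- For `α ≠ 0, -1`, the orbit of `(X_α, t')` is exactly the set of pairs `(X, Y)` with
`X ∼ t`, `Y ∼ t'` and `tr(XY) = sr + s⁻¹r⁻¹ + αΔΔ'`. -/
theorem orbit_eq_trace_fiber {K : Type*} [Field K] [IsAlgClosed K]
    (s r : K) (hs : s ≠ 0) (hr : r ≠ 0) (hs2 : s ^ 2 ≠ 1) (hr2 : r ^ 2 ≠ 1)
    (α : K) (hα0 : α ≠ 0) (hα1 : α ≠ -1) :
    pairOrbit (Xa s hs α) (diagSL r hr) =
      {pq : SpecialLinearGroup (Fin 2) K × SpecialLinearGroup (Fin 2) K |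
        (∃ A : SpecialLinearGroup (Fin 2) K, pq.1 = A * diagSL s hs * A⁻¹) ∧
        (∃ A : SpecialLinearGroup (Fin 2) K, pq.2 = A * diagSL r hr * A⁻¹) ∧
        Matrix.trace ((pq.1 : Matrix (Fin 2) (Fin 2) K) * (pq.2 : Matrix (Fin 2) (Fin 2) K)) =
          s * r + s⁻¹ * r⁻¹ + α * (s - s⁻¹) * (r - r⁻¹)} := by
  have hΔ : s - s⁻¹ ≠ 0 := by
    intro h
    apply hs2
    have h' : s * (s - s⁻¹) = 0 := by rw [h, mul_zero]
    rw [mul_sub, mul_inv_cancel₀ hs] at h'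
    linear_combination h'
  have hΔ' : r - r⁻¹ ≠ 0 := by
    intro h
    apply hr2
    have h' : r * (r - r⁻¹) = 0 := by rw [h, mul_zero]
    rw [mul_sub, mul_inv_cancel₀ hr] at h'
    linear_combination h'
  have h1α : 1 + α ≠ 0 := fun h => hα1 (by linear_combination h)
  ext pq
  obtain ⟨X, Y⟩ := pq
  simp only [pairOrbit, Set.mem_setOf_eq]
  constructor
  · rintro ⟨A, hA⟩
    rw [Prod.mk.injEq] at hA
    obtain ⟨h1, h2⟩ := hA
    refine ⟨⟨A * Bmat α, ?_⟩, ⟨A, h2⟩, ?_⟩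
    · rw [h1, Xa_eq_conj s hs α]
      group
    · rw [h1, h2, ← SL2_coe_mul,
        show (A * Xa s hs α * A⁻¹) * (A * diagSL r hr * A⁻¹) =
          A * (Xa s hs α * diagSL r hr) * A⁻¹ by group,
        SL2_trace_conj, SL2_coe_mul]
      exact trace_Xa_diag s r hs hr α
  · rintro ⟨⟨A₁, h1⟩, ⟨A₂, h2⟩, htr⟩
    set Z : SpecialLinearGroup (Fin 2) K := A₂⁻¹ * X * A₂ with hZdef
    set M : Matrix (Fin 2) (Fin 2) K := (Z : Matrix (Fin 2) (Fin 2) K) with hM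
    have hdet : M 0 0 * M 1 1 - M 0 1 * M 1 0 = 1 := by
      have := Z.2
      rwa [Matrix.det_fin_two] at this
    have htrZmat : Matrix.trace M = s + s⁻¹ := by
      rw [hM, show Z = A₂⁻¹ * X * (A₂⁻¹)⁻¹ by rw [inv_inv], SL2_trace_conj, h1,
        SL2_trace_conj]
      simp [diagSL, Matrix.trace_fin_two]
    have htrZ : M 0 0 + M 1 1 = s + s⁻¹ := by
      rwa [Matrix.trace_fin_two] at htrZmat
    have htrZt' : Matrix.trace ((Z * diagSL r hr : SpecialLinearGroup (Fin 2) K) :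
        Matrix (Fin 2) (Fin 2) K) =
        s * r + s⁻¹ * r⁻¹ + α * (s - s⁻¹) * (r - r⁻¹) := by
      rw [show Z * diagSL r hr =
            A₂⁻¹ * (X * (A₂ * diagSL r hr * A₂⁻¹)) * (A₂⁻¹)⁻¹ by rw [hZdef]; group,
        SL2_trace_conj, ← h2, SL2_coe_mul]
      exact htr
    have htr2 : M 0 0 * r + M 1 1 * r⁻¹ =
        s * r + s⁻¹ * r⁻¹ + α * (s - s⁻¹) * (r - r⁻¹) := by
      rw [SL2_coe_mul, ← hM, Matrix.trace_fin_two] at htrZt'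
      simpa [Matrix.mul_apply, Fin.sum_univ_two, diagSL] using htrZt'
    -- solve for the diagonal entries
    have key : (M 0 0 - (s + α * (s - s⁻¹))) * (r - r⁻¹) = 0 := by
      linear_combination htr2 - r⁻¹ * htrZ
    have ha : M 0 0 = s + α * (s - s⁻¹) := by
      rcases mul_eq_zero.mp key with h | h
      · exact sub_eq_zero.mp h
      · exact absurd h hΔ'
    have hd : M 1 1 = s⁻¹ - α * (s - s⁻¹) := by linear_combination htrZ - ha
    have hbc : M 0 1 * M 1 0 = -(α * (1 + α) * (s - s⁻¹) ^ 2) := by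
      have h' : M 0 1 * M 1 0 = M 0 0 * M 1 1 - 1 := by linear_combination -hdet
      rw [h', ha, hd]
      field_simp
      ring
    have hbcne : M 0 1 * M 1 0 ≠ 0 := by
      rw [hbc]
      exact neg_ne_zero.mpr (mul_ne_zero (mul_ne_zero hα0 h1α) (pow_ne_zero 2 hΔ))
    have hb : M 0 1 ≠ 0 := left_ne_zero_of_mul hbcne
    have hαΔ : α * (s - s⁻¹) ≠ 0 := mul_ne_zero hα0 hΔ
    obtain ⟨lam, hlam⟩ :=
      IsAlgClosed.exists_pow_nat_eq (M 0 1 / (-(α * (s - s⁻¹)))) (n := 2) (by norm_num)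
    have hbval : M 0 1 = lam ^ 2 * -(α * (s - s⁻¹)) := by
      rw [hlam]
      exact (div_mul_cancel₀ _ (neg_ne_zero.mpr hαΔ)).symm
    have hlam0 : lam ≠ 0 := by
      intro h
      apply hb
      rw [hbval, h]
      ring
    have hcval : M 1 0 * lam ^ 2 = (1 + α) * (s - s⁻¹) := by
      apply mul_left_cancel₀ (neg_ne_zero.mpr hαΔ)
      linear_combination hbc - M 1 0 * hbval
    have hZeq : Z = diagSL lam hlam0 * Xa s hs α * (diagSL lam hlam0)⁻¹ := by
      apply Subtype.ext
      rw [diag_conj_coe, ← hM]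
      ext i j
      fin_cases i <;> fin_cases j
      · simp [Xa]
        linear_combination ha
      · simp [Xa]
        linear_combination hbval
      · simp [Xa]
        field_simp
        linear_combination s * hcval - (1 + α) * mul_inv_cancel₀ hs
      · simp [Xa]
        linear_combination hd
    refine ⟨A₂ * diagSL lam hlam0, ?_⟩
    have hX : X = A₂ * (diagSL lam hlam0 * Xa s hs α * (diagSL lam hlam0)⁻¹) * A₂⁻¹ := by
      rw [← hZeq, hZdef]
      group
    have ht'D : A₂ * diagSL lam hlam0 * diagSL r hr * (A₂ * diagSL lam hlam0)⁻¹ =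
        A₂ * diagSL r hr * A₂⁻¹ := by
      rw [show A₂ * diagSL lam hlam0 * diagSL r hr * (A₂ * diagSL lam hlam0)⁻¹ =
          A₂ * (diagSL lam hlam0 * diagSL r hr) * (diagSL lam hlam0)⁻¹ * A₂⁻¹ by group,
        diagSL_mul_comm]
      group
    rw [Prod.mk.injEq]
    constructor
    · rw [hX]
      group
    · rw [h2, ← ht'D]
end
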